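/- If the positive sequence $(b_n)$ is $q$-increasing ($b_{n-1}/b_n \leq q < 1$ for all $n \geq 1$), then $v_{k,l} \leq q^l/(q^2;q^2)_l$ for all $k,l \geq 0$, and consequently $V_n^2 = \sum_{l=0}^\infty v_{n,l}^2 \leq \left((q^2;q^2)_\infty^2 (1-q^2)\right)^{-1}$. -/

import Mathlib

/-- The coefficients `v_{k,l} = (-1)^l b_0⋯b_{k-1} b_{k,k+2l}`, defined via their
initial values `v_{k,0} = 1`, `v_{0,l} = ∏_{j=1}^l b_{2j-2}/b_{2j-1}` and recurrence
`v_{k+1,l} = (b_k/b_{k+2l}) v_{k,l} + (b_{k+2l-1}/b_{k+2l}) v_{k+1,l-1}`. -/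
noncomputable def vsec (b : ℕ → ℝ) : ℕ → ℕ → ℝ
  | 0, l => ∏ j ∈ Finset.range l, b (2 * j) / b (2 * j + 1)
  | _ + 1, 0 => 1
  | k + 1, l + 1 =>
      b k / b (k + 2 * (l + 1)) * vsec b k (l + 1) +
        b (k + 2 * l + 1) / b (k + 2 * (l + 1)) * vsec b (k + 1) l
  termination_by k l => (k, l)

open Finset Real Filter Topology

lemma growth (b : ℕ → ℝ) (q : ℝ) (hq0 : 0 < q)
    (hqinc : ∀ n : ℕ, 1 ≤ n → b (n - 1) ≤ q * b n) :
    ∀ k m : ℕ, b k ≤ q ^ m * b (k + m) := by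
  intro k m
  induction m with
  | zero => simp
  | succ m ih =>
    have h1 : b (k + m) ≤ q * b (k + m + 1) := by
      have := hqinc (k + m + 1) (by omega)
      simpa using this
    calc b k ≤ q ^ m * b (k + m) := ih
      _ ≤ q ^ m * (q * b (k + m + 1)) := by
          exact mul_le_mul_of_nonneg_left h1 (by positivity)
      _ = q ^ (m + 1) * b (k + m + 1) := by ring
  
lemma part1 (b : ℕ → ℝ) (q : ℝ) (hb : ∀ n, 0 < b n) (hq0 : 0 < q) (hq1 : q < 1)
    (hqinc : ∀ n : ℕ, 1 ≤ n → b (n - 1) ≤ q * b n) :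
    ∀ k l : ℕ, 0 ≤ vsec b k l ∧
      vsec b k l ≤ q ^ l / ∏ j ∈ Finset.range l, (1 - q ^ (2 * j + 2)) := by
  have hqlt : ∀ m : ℕ, q ^ (m + 1) < 1 := fun m => pow_lt_one₀ (le_of_lt hq0) hq1 (by omega)
  have hDpos : ∀ l : ℕ, 0 < ∏ j ∈ Finset.range l, (1 - q ^ (2 * j + 2)) := by
    intro l
    apply Finset.prod_pos
    intro j _
    have := hqlt (2 * j + 1)
    linarith
  have hDle : ∀ l : ℕ, ∏ j ∈ Finset.range l, (1 - q ^ (2 * j + 2)) ≤ 1 := by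
    intro l
    apply Finset.prod_le_one
    · intro j _
      have := hqlt (2 * j + 1); linarith
    · intro j _
      have : 0 < q ^ (2 * j + 2) := by positivity
      linarith
  set D := fun l : ℕ => ∏ j ∈ Finset.range l, (1 - q ^ (2 * j + 2)) with hD
  have hqleD : ∀ l : ℕ, q ^ l ≤ q ^ l / D l := by
    intro l
    rw [le_div_iff₀ (hDpos l)]
    calc q ^ l * D l ≤ q ^ l * 1 := by
          exact mul_le_mul_of_nonneg_left (hDle l) (by positivity)
      _ = q ^ l := mul_one _
  intro k
  induction k with
  | zero =>
    intro l
    constructor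
    · rw [vsec]
      apply Finset.prod_nonneg
      intro j _
      exact le_of_lt (div_pos (hb _) (hb _))
    · rw [vsec]
      refine le_trans ?_ (hqleD l)
      calc ∏ j ∈ Finset.range l, b (2 * j) / b (2 * j + 1)
          ≤ ∏ j ∈ Finset.range l, q := by
            apply Finset.prod_le_prod
            · intro j _; exact le_of_lt (div_pos (hb _) (hb _))
            · intro j _
              rw [div_le_iff₀ (hb _)]
              have := hqinc (2 * j + 1) (by omega)
              simpa [mul_comm] using this
        _ = q ^ l := by simp
  | succ k ihk =>
    intro l
    induction l with
    | zero =>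
      constructor
      · rw [vsec]; norm_num
      · rw [vsec]; simp [hD]
    | succ l ihl =>
      have ha : b k / b (k + 2 * (l + 1)) ≤ q ^ (2 * (l + 1)) := by
        rw [div_le_iff₀ (hb _)]
        have := growth b q hq0 hqinc k (2 * (l + 1))
        linarith
      have ha0 : 0 ≤ b k / b (k + 2 * (l + 1)) := le_of_lt (div_pos (hb _) (hb _))
      have he : b (k + 2 * l + 1) / b (k + 2 * (l + 1)) ≤ q := by
        rw [div_le_iff₀ (hb _)]
        have := hqinc (k + 2 * (l + 1)) (by omega)
        have h2 : k + 2 * (l + 1) - 1 = k + 2 * l + 1 := by omega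
        rw [h2] at this
        linarith
      have he0 : 0 ≤ b (k + 2 * l + 1) / b (k + 2 * (l + 1)) :=
        le_of_lt (div_pos (hb _) (hb _))
      obtain ⟨hx0, hx⟩ := ihk (l + 1)
      obtain ⟨hy0, hy⟩ := ihl
      constructor
      · rw [vsec]
        exact add_nonneg (mul_nonneg ha0 hx0) (mul_nonneg he0 hy0)
      · rw [vsec]
        have hc1 : 0 ≤ q ^ (l + 1) / D (l + 1) := le_of_lt (div_pos (by positivity) (hDpos _))
        have key : q ^ (2 * (l + 1)) * (q ^ (l + 1) / D (l + 1)) + q * (q ^ l / D l)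
            = q ^ (l + 1) / D (l + 1) := by
          have hstep : D (l + 1) = D l * (1 - q ^ (2 * l + 2)) := by
            simp [hD, Finset.prod_range_succ]
          have h1 : (0:ℝ) < D l := hDpos l
          have h2 : (0:ℝ) < 1 - q ^ (2 * l + 2) := by
            have := hqlt (2 * l + 1); linarith
          rw [hstep]
          field_simp
          ring
        calc b k / b (k + 2 * (l + 1)) * vsec b k (l + 1) +
              b (k + 2 * l + 1) / b (k + 2 * (l + 1)) * vsec b (k + 1) l
            ≤ q ^ (2 * (l + 1)) * (q ^ (l + 1) / D (l + 1)) + q * (q ^ l / D l) := by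
              apply add_le_add
              · exact le_trans (mul_le_mul_of_nonneg_left hx ha0)
                  (mul_le_mul_of_nonneg_right ha hc1)
              · exact le_trans (mul_le_mul_of_nonneg_left hy he0)
                  (mul_le_mul_of_nonneg_right he (le_of_lt (div_pos (by positivity) (hDpos _))))
          _ = q ^ (l + 1) / D (l + 1) := key

/-- if `(b_n)` is `q`-increasing, then `v_{k,l} ≤ q^l/(q²;q²)_l` for all
`k, l ≥ 0`, and `V_n² = ∑_l v_{n,l}² ≤ ((q²;q²)_∞² (1-q²))⁻¹`. -/
theorem stmt11 (b : ℕ → ℝ) (q : ℝ) (hb : ∀ n, 0 < b n) (hq0 : 0 < q) (hq1 : q < 1)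
    (hqinc : ∀ n : ℕ, 1 ≤ n → b (n - 1) ≤ q * b n) :
    (∀ k l : ℕ, vsec b k l ≤ q ^ l / ∏ j ∈ Finset.range l, (1 - q ^ (2 * j + 2))) ∧
    (∀ n : ℕ, ∑' l : ℕ, (vsec b n l) ^ 2 ≤
      ((∏' j : ℕ, (1 - q ^ (2 * j + 2))) ^ 2 * (1 - q ^ 2))⁻¹) := by
  have hmain := part1 b q hb hq0 hq1 hqinc
  refine ⟨fun k l => (hmain k l).2, ?_⟩
  -- setup for the product
  set f : ℕ → ℝ := fun j => 1 - q ^ (2 * j + 2) with hf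
  have hqlt : ∀ m : ℕ, q ^ (m + 1) < 1 := fun m => pow_lt_one₀ (le_of_lt hq0) hq1 (by omega)
  have hfpos : ∀ j, 0 < f j := by
    intro j
    have := hqlt (2 * j + 1)
    simp only [hf]
    linarith
  have hq2 : 0 < 1 - q ^ 2 := by nlinarith
  -- summability of logs
  have hlog : Summable fun j => Real.log (f j) := by
    rw [← summable_neg_iff]
    apply Summable.of_nonneg_of_le (g := fun j => -Real.log (f j))
      (f := fun j => (q ^ 2) ^ j * (q ^ 2 / (1 - q ^ 2)))
    · intro j
      rw [neg_nonneg]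
      apply Real.log_nonpos
      · have := hfpos j; linarith
      · have : 0 < q ^ (2 * j + 2) := by positivity
        simp only [hf]; linarith
    · intro j
      have h1 : q ^ (2 * j + 2) ≤ q ^ 2 := by
        apply pow_le_pow_of_le_one (le_of_lt hq0) (le_of_lt hq1) (by omega)
      have h2 : 0 < f j := hfpos j
      have h3 : -Real.log (f j) = Real.log (f j)⁻¹ := (Real.log_inv _).symm
      rw [h3]
      have h4 : Real.log (f j)⁻¹ ≤ (f j)⁻¹ - 1 :=
        Real.log_le_sub_one_of_pos (by positivity)
      refine le_trans h4 ?_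
      -- goal: (f j)⁻¹ - 1 ≤ (q^2)^j * (q^2 / (1 - q^2))
      have h5 : (f j)⁻¹ - 1 = q ^ (2 * j + 2) / f j := by
        field_simp [hf]
        simp only [hf]; ring
      rw [h5]
      have h6 : 1 - q ^ 2 ≤ f j := by simp only [hf]; linarith
      have h7 : q ^ (2 * j + 2) / f j ≤ q ^ (2 * j + 2) / (1 - q ^ 2) :=
        div_le_div_of_nonneg_left (by positivity) hq2 h6
      have h8 : q ^ (2 * j + 2) / (1 - q ^ 2) = (q ^ 2) ^ j * (q ^ 2 / (1 - q ^ 2)) := by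
        have : q ^ (2 * j + 2) = (q ^ 2) ^ j * q ^ 2 := by
          rw [← pow_mul, ← pow_add]
        rw [this, mul_div_assoc]
      rw [← h8]
      exact le_trans h7 (le_refl _)
    · apply Summable.mul_right
      exact summable_geometric_of_lt_one (by positivity) (by nlinarith)
  -- multipliability and positivity of the infinite product
  have hmult : Multipliable f :=
    Real.multipliable_of_summable_log hfpos hlog
  have hexp : Real.exp (∑' j, Real.log (f j)) = ∏' j, f j := by
    exact Real.rexp_tsum_eq_tprod hfpos hlog
  have hPpos : 0 < ∏' j, f j := hexp ▸ Real.exp_pos _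
  have htend : Tendsto (fun n => ∏ i ∈ Finset.range n, f i) atTop (𝓝 (∏' j, f j)) :=
    Multipliable.tendsto_prod_tprod_nat hmult
  have hPle : ∀ l : ℕ, ∏' j, f j ≤ ∏ i ∈ Finset.range l, f i := by
    intro l
    apply le_of_tendsto htend
    filter_upwards [eventually_ge_atTop l] with m hm
    rw [← Finset.prod_range_mul_prod_Ico f hm]
    have h1 : ∏ i ∈ Finset.Ico l m, f i ≤ 1 := by
      apply Finset.prod_le_one
      · intro i _; exact le_of_lt (hfpos i)
      · intro i _
        have : 0 < q ^ (2 * i + 2) := by positivity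
        simp only [hf]; linarith
    calc (∏ i ∈ Finset.range l, f i) * ∏ i ∈ Finset.Ico l m, f i
        ≤ (∏ i ∈ Finset.range l, f i) * 1 := by
          apply mul_le_mul_of_nonneg_left h1
          exact Finset.prod_nonneg fun i _ => le_of_lt (hfpos i)
      _ = ∏ i ∈ Finset.range l, f i := mul_one _
  set P := ∏' j, f j with hP
  have hq2lt : q ^ 2 < 1 := by nlinarith
  intro n
  have hle : ∀ l : ℕ, (vsec b n l) ^ 2 ≤ (q ^ 2) ^ l / P ^ 2 := by
    intro l
    have h1 : vsec b n l ≤ q ^ l / ∏ j ∈ Finset.range l, f j := (hmain n l).2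
    have h2 : q ^ l / ∏ j ∈ Finset.range l, f j ≤ q ^ l / P := by
      apply div_le_div_of_nonneg_left (by positivity) hPpos (hPle l)
    have h3 : (vsec b n l) ^ 2 ≤ (q ^ l / P) ^ 2 :=
      pow_le_pow_left₀ (hmain n l).1 (le_trans h1 h2) 2
    refine le_trans h3 (le_of_eq ?_)
    rw [div_pow, ← pow_mul, mul_comm l 2, pow_mul]
  have hsum_bound : Summable (fun l : ℕ => (q ^ 2) ^ l / P ^ 2) :=
    (summable_geometric_of_lt_one (by positivity) hq2lt).div_const _
  have hsum_v : Summable (fun l : ℕ => (vsec b n l) ^ 2) :=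
    Summable.of_nonneg_of_le (fun l => sq_nonneg _) hle hsum_bound
  calc ∑' l : ℕ, (vsec b n l) ^ 2 ≤ ∑' l : ℕ, (q ^ 2) ^ l / P ^ 2 :=
        Summable.tsum_le_tsum hle hsum_v hsum_bound
    _ = (∑' l : ℕ, (q ^ 2) ^ l) / P ^ 2 := tsum_div_const
    _ = (1 - q ^ 2)⁻¹ / P ^ 2 := by rw [tsum_geometric_of_lt_one (by positivity) hq2lt]
    _ = (P ^ 2 * (1 - q ^ 2))⁻¹ := by rw [mul_inv]; ring
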